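/- Let t ≥ 1 and k ∈ ℤ be integers, let S be a finite set of integers, and let F : S → ℂ. Then Σ_{j} cos(2πj/t)·Σ_{m∈S, m≡j̄k (mod t)} F(m) = (μ(t)/t)·Σ_{m∈S} F(m) + (1/(2t))·Σ_{0<|s|≤t/2} [ S(1, sk; t) + S(−1, sk; t) ]·Σ_{m∈S} F(m)·e_t(−sm), where the outer j-sum runs over a reduced residue system modulo t represented by nonzero integers j with −t/2 < j ≤ t/2, and j̄ denotes the inverse of j modulo t. -/

import Mathlib

open Finset

noncomputable section

/-- `invMod x n` is the multiplicative inverse of `x` modulo `n` (as a natural number). -/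
def invMod (x n : ℕ) : ℕ := ((x : ZMod n))⁻¹.val

/-- The multiplicative inverse modulo `n` of an integer `j`. -/
def invModZ (j : ℤ) (n : ℕ) : ℕ := ((j : ZMod n))⁻¹.val

/-- The additive character `e_t(x) = e^{2πix/t}`. -/
def eChar (t : ℕ) (x : ℤ) : ℂ := Complex.exp (2 * Real.pi * Complex.I * (x : ℂ) / (t : ℂ))

/-- The Kloosterman sum `S(a,b;c) = ∑_{j ≤ c, (j,c)=1} e_c(ja + j̄b)`. -/
def kloosterman (a b : ℤ) (c : ℕ) : ℂ :=
  ∑ j ∈ (Finset.Icc 1 c).filter (fun j : ℕ => Nat.Coprime j c),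
    eChar c ((j : ℤ) * a + (invMod j c : ℤ) * b)

/-- A complete set of residues modulo `t` represented by integers `s`
with `-t/2 < s ≤ t/2`, i.e. `0 < |s| ≤ t/2` together with `0`. -/
def halfRes (t : ℕ) : Finset ℤ :=
  Finset.Icc (-(((t - 1) / 2 : ℕ) : ℤ)) (((t / 2 : ℕ) : ℤ))

lemma eChar_add (t : ℕ) (x y : ℤ) : eChar t (x + y) = eChar t x * eChar t y := by
  rw [eChar, eChar, eChar, ← Complex.exp_add]
  push_cast
  ring_nf

lemma eChar_zero (t : ℕ) : eChar t 0 = 1 := by simp [eChar]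

lemma eChar_nat_mul (t : ℕ) (ht : t ≠ 0) (n : ℤ) : eChar t ((t : ℤ) * n) = 1 := by
  rw [eChar]
  have h : 2 * (Real.pi : ℂ) * Complex.I * (((t : ℤ) * n : ℤ) : ℂ) / (t : ℂ)
      = (n : ℤ) * (2 * Real.pi * Complex.I) := by
    have ht' : (t : ℂ) ≠ 0 := Nat.cast_ne_zero.mpr ht
    field_simp
    push_cast
    ring
  rw [h, Complex.exp_int_mul_two_pi_mul_I]

lemma eChar_congr {t : ℕ} (ht : t ≠ 0) {x y : ℤ} (h : x % (t : ℤ) = y % (t : ℤ)) :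
    eChar t x = eChar t y := by
  have hd : (t : ℤ) ∣ x - y :=
    Int.dvd_of_emod_eq_zero (Int.emod_eq_emod_iff_emod_sub_eq_zero.mp h)
  obtain ⟨n, hn⟩ := hd
  have : x = y + (t : ℤ) * n := by linarith
  rw [this, eChar_add, eChar_nat_mul t ht, mul_one]

lemma eChar_pow (t : ℕ) (n : ℕ) (a : ℤ) : eChar t ((n : ℤ) * a) = (eChar t a) ^ n := by
  induction n with
  | zero => simp [eChar_zero]
  | succ n ih =>
      have : ((n + 1 : ℕ) : ℤ) * a = (n : ℤ) * a + a := by push_cast; ring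
      rw [this, eChar_add, ih, pow_succ]

lemma eChar_ne_one {t : ℕ} (ht : t ≠ 0) {a : ℤ} (h : ¬ (t : ℤ) ∣ a) : eChar t a ≠ 1 := by
  intro hc
  rw [eChar, Complex.exp_eq_one_iff] at hc
  obtain ⟨n, hn⟩ := hc
  have ht' : (t : ℂ) ≠ 0 := Nat.cast_ne_zero.mpr ht
  have hpi : (2 * (Real.pi : ℂ) * Complex.I) ≠ 0 := by
    simp [Real.pi_ne_zero, Complex.I_ne_zero]
  have hceq : (a : ℂ) = (n : ℂ) * (t : ℂ) := by
    field_simp at hn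
    linear_combination hn
  have : a = n * t := by exact_mod_cast hceq
  exact h ⟨n, by linarith⟩

lemma eChar_geom {t : ℕ} (ht : t ≠ 0) (a : ℤ) :
    ∑ n ∈ Finset.range t, eChar t ((n : ℤ) * a) = if (t : ℤ) ∣ a then (t : ℂ) else 0 := by
  by_cases hd : (t : ℤ) ∣ a
  · rw [if_pos hd]
    have : ∀ n ∈ Finset.range t, eChar t ((n : ℤ) * a) = 1 := by
      intro n _
      have : (t : ℤ) ∣ (n : ℤ) * a := Dvd.dvd.mul_left hd _
      obtain ⟨c, hc⟩ := this
      rw [hc, eChar_nat_mul t ht]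
    rw [Finset.sum_congr rfl this]
    simp
  · rw [if_neg hd]
    have hne : eChar t a ≠ 1 := eChar_ne_one ht hd
    have : ∑ n ∈ Finset.range t, eChar t ((n : ℤ) * a) = ∑ n ∈ Finset.range t, (eChar t a) ^ n :=
      Finset.sum_congr rfl fun n _ => eChar_pow t n a
    rw [this, geom_sum_eq hne]
    have : eChar t a ^ t = 1 := by
      rw [← eChar_pow, eChar_nat_mul t ht]
    rw [this]
    simp

lemma gcd_emod (a : ℤ) (t : ℕ) : Int.gcd (a % (t : ℤ)) (t : ℤ) = Int.gcd a (t : ℤ) := by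
  have key : ∀ x y : ℤ, x % (t:ℤ) = y % (t:ℤ) →
      (Int.gcd (x % (t:ℤ)) (t:ℤ) : ℤ) ∣ y := by
    intro x y h
    have h1 : (Int.gcd (x % (t:ℤ)) (t:ℤ) : ℤ) ∣ y % t := by rw [← h]; exact Int.gcd_dvd_left _ _
    have h2 : (Int.gcd (x % (t:ℤ)) (t:ℤ) : ℤ) ∣ (t:ℤ) := Int.gcd_dvd_right _ _
    have := Int.emod_add_mul_ediv y t
    calc (Int.gcd (x % (t:ℤ)) (t:ℤ) : ℤ) ∣ y % t + (t:ℤ) * (y / t) :=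
          dvd_add h1 (h2.mul_right _)
      _ = y := Int.emod_add_mul_ediv y t
  apply Nat.dvd_antisymm
  · have := Int.dvd_gcd (key a a rfl) (Int.gcd_dvd_right (a := a % (t:ℤ)) (b := (t:ℤ)))
    exact_mod_cast this
  · have h1 : (Int.gcd a (t:ℤ) : ℤ) ∣ a % t := by
      have := key (a % t) a (by simp [Int.emod_emod_of_dvd])
      have h2 : (Int.gcd a (t:ℤ) : ℤ) ∣ a := Int.gcd_dvd_left _ _
      have h3 : (Int.gcd a (t:ℤ) : ℤ) ∣ (t:ℤ) := Int.gcd_dvd_right _ _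
      have h4 := Int.emod_add_mul_ediv a t
      have : a % t = a - (t:ℤ) * (a / t) := by linarith
      rw [this]
      exact dvd_sub h2 (h3.mul_right _)
    have := Int.dvd_gcd h1 (Int.gcd_dvd_right (a := a) (b := (t:ℤ)))
    exact_mod_cast this

lemma sum_halfRes {t : ℕ} (ht : t ≠ 0) (f : ℤ → ℂ)
    (hf : ∀ x y : ℤ, x % (t : ℤ) = y % (t : ℤ) → f x = f y) :
    ∑ j ∈ halfRes t, f j = ∑ n ∈ Finset.range t, f (n : ℤ) := by
  have h0 : (0 : ℤ) < (t : ℤ) := by exact_mod_cast Nat.pos_of_ne_zero ht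
  apply Finset.sum_nbij' (i := fun j : ℤ => (j % (t : ℤ)).toNat)
    (j := fun n : ℕ => if (n : ℤ) ≤ ((t / 2 : ℕ) : ℤ) then (n : ℤ) else (n : ℤ) - t)
  · intro j _
    have := Int.emod_nonneg j (by omega : (t:ℤ) ≠ 0)
    have := Int.emod_lt_of_pos j h0
    simp only [Finset.mem_range]
    omega
  · intro n hn
    simp only [Finset.mem_range] at hn
    simp only [halfRes, Finset.mem_Icc]
    split_ifs <;> omega
  · intro j hj
    simp only [halfRes, Finset.mem_Icc] at hj
    rcases le_or_gt 0 j with h | h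
    · have hm : j % (t:ℤ) = j := Int.emod_eq_of_lt h (by omega)
      rw [hm]
      split_ifs <;> omega
    · have h1 : j % (t:ℤ) = (j + t) % (t:ℤ) := by
        conv_lhs => rw [show j = (j + t) + (t:ℤ) * (-1) by ring]
        rw [Int.add_mul_emod_self_left]
      have hm : j % (t:ℤ) = j + t := by
        rw [h1]; exact Int.emod_eq_of_lt (by omega) (by omega)
      rw [hm]
      split_ifs <;> omega
  · intro n hn
    simp only [Finset.mem_range] at hn
    split_ifs with hc
    · have hm : (n : ℤ) % (t:ℤ) = n := Int.emod_eq_of_lt (by omega) (by omega)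
      omega
    · have h1 : ((n : ℤ) - t) % (t:ℤ) = (n : ℤ) % (t:ℤ) := by
        conv_lhs => rw [show (n:ℤ) - t = n + (t:ℤ) * (-1) by ring]
        rw [Int.add_mul_emod_self_left]
      have hm : (n : ℤ) % (t:ℤ) = n := Int.emod_eq_of_lt (by omega) (by omega)
      omega
  · intro j _
    apply hf
    have := Int.emod_nonneg j (by omega : (t:ℤ) ≠ 0)
    have h2 : ((j % (t:ℤ)).toNat : ℤ) = j % t := by omega
    rw [h2, Int.emod_emod_of_dvd _ dvd_rfl]

lemma sum_halfRes_coprime {t : ℕ} (ht : t ≠ 0) (f : ℤ → ℂ)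
    (hf : ∀ x y : ℤ, x % (t : ℤ) = y % (t : ℤ) → f x = f y) :
    ∑ j ∈ (halfRes t).filter (fun j : ℤ => Int.gcd j (t : ℤ) = 1), f j
      = ∑ j ∈ (Finset.Icc 1 t).filter (fun j : ℕ => Nat.Coprime j t), f (j : ℤ) := by
  have h0 : (0 : ℤ) < (t : ℤ) := by exact_mod_cast Nat.pos_of_ne_zero ht
  have hmodnn : ∀ j : ℤ, 0 ≤ j % (t:ℤ) := fun j => Int.emod_nonneg j (by omega)
  have hmodlt : ∀ j : ℤ, j % (t:ℤ) < t := fun j => Int.emod_lt_of_pos j h0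
  have hgcdnat : ∀ a : ℤ, 0 ≤ a → Int.gcd a (t:ℤ) = Nat.gcd a.toNat t := by
    intro a ha
    rw [Int.gcd]
    congr 1 <;> omega
  apply Finset.sum_nbij'
    (i := fun j : ℤ => if j % (t:ℤ) = 0 then t else (j % (t:ℤ)).toNat)
    (j := fun n : ℕ => if ((n:ℤ) % (t:ℤ)) ≤ ((t / 2 : ℕ) : ℤ) then (n : ℤ) % t
      else (n : ℤ) % t - t)
  · -- maps to Icc filter coprime
    intro j hj
    simp only [Finset.mem_filter, halfRes, Finset.mem_Icc] at hj
    obtain ⟨_, hg⟩ := hj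
    rw [← gcd_emod j t] at hg
    simp only [Finset.mem_filter, Finset.mem_Icc]
    split_ifs with hz
    · rw [hz] at hg
      simp [Int.gcd] at hg
      subst hg
      simp [Nat.Coprime]
    · have h1 := hmodnn j; have h2 := hmodlt j
      refine ⟨⟨by omega, by omega⟩, ?_⟩
      have := hgcdnat (j % t) h1
      rw [this] at hg
      exact hg
  · -- maps back
    intro n hn
    simp only [Finset.mem_filter, Finset.mem_Icc] at hn
    obtain ⟨⟨h1, h2⟩, hc⟩ := hn
    simp only [Finset.mem_filter, halfRes, Finset.mem_Icc]
    have hg : Int.gcd ((n:ℤ) % t) (t:ℤ) = 1 := by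
      rw [gcd_emod]
      have : Int.gcd (n:ℤ) (t:ℤ) = Nat.gcd n t := by
        rw [hgcdnat _ (by omega)]; simp
      rw [this]; exact hc
    have hm1 := hmodnn (n:ℤ); have hm2 := hmodlt (n:ℤ)
    constructor
    · split_ifs <;> omega
    · split_ifs with hcond
      · exact hg
      · rw [← hg]
        rw [← gcd_emod ((n:ℤ) % t - t) t]
        congr 1
        conv_lhs => rw [show (n:ℤ) % t - t = (n:ℤ) % t + (t:ℤ) * (-1) by ring]
        rw [Int.add_mul_emod_self_left, Int.emod_emod_of_dvd _ dvd_rfl]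
  · -- left inverse
    intro j hj
    simp only [Finset.mem_filter, halfRes, Finset.mem_Icc] at hj
    obtain ⟨⟨hl, hr⟩, hg⟩ := hj
    by_cases hz : j % (t:ℤ) = 0
    · rw [if_pos hz]
      rw [← gcd_emod j t, hz] at hg
      simp [Int.gcd] at hg
      have hj0 : j = 0 := by omega
      have hts : ((t:ℕ):ℤ) % (t:ℤ) = 0 := by simp
      rw [hts, if_pos (by omega)]
      omega
    · rw [if_neg hz]
      have h1 := hmodnn j; have h2 := hmodlt j
      have hcast : (((j % (t:ℤ)).toNat : ℕ) : ℤ) = j % t := by omega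
      rw [hcast, Int.emod_emod_of_dvd _ dvd_rfl]
      rcases le_or_gt 0 j with h | h
      · have hm : j % (t:ℤ) = j := Int.emod_eq_of_lt h (by omega)
        rw [hm]; split_ifs <;> omega
      · have heq : j % (t:ℤ) = j + t := by
          conv_lhs => rw [show j = (j + t) + (t:ℤ) * (-1) by ring]
          rw [Int.add_mul_emod_self_left]
          exact Int.emod_eq_of_lt (by omega) (by omega)
        rw [heq]; split_ifs <;> omega
  · -- right inverse
    intro n hn
    simp only [Finset.mem_filter, Finset.mem_Icc] at hn
    obtain ⟨⟨h1, h2⟩, hc⟩ := hn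
    have hm1 := hmodnn (n:ℤ); have hm2 := hmodlt (n:ℤ)
    rcases eq_or_lt_of_le h2 with heq | hlt
    · -- n = t, coprime t t forces t = 1
      have ht1 : t = 1 := by
        have h' := hc
        rw [heq] at h'
        simpa [Nat.Coprime, Nat.gcd_self] using h'
      subst ht1
      have hn1 : n = 1 := by omega
      subst hn1
      norm_num
    · have hm : (n:ℤ) % (t:ℤ) = n := Int.emod_eq_of_lt (by omega) (by omega)
      have hx : ((n:ℤ) % t - t) % (t:ℤ) = (n:ℤ) % t := by
        conv_lhs => rw [show (n:ℤ) % t - t = (n:ℤ) % t + (t:ℤ) * (-1) by ring]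
        rw [Int.add_mul_emod_self_left, Int.emod_emod_of_dvd _ dvd_rfl]
      by_cases hcond : ((n:ℤ) % (t:ℤ)) ≤ ((t / 2 : ℕ) : ℤ)
      · rw [if_pos hcond, Int.emod_emod_of_dvd _ dvd_rfl, hm, if_neg (by omega)]
        omega
      · rw [if_neg hcond, hx, hm, if_neg (by omega)]
        omega
  · -- values agree
    intro j hj
    apply hf
    split_ifs with hz
    · rw [hz]; simp
    · have h1 := hmodnn j
      have hcast : (((j % (t:ℤ)).toNat : ℕ) : ℤ) = j % t := by omega
      rw [hcast, Int.emod_emod_of_dvd _ dvd_rfl]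

lemma eChar_div (n d : ℕ) (hd : d ∣ n) (hn : n ≠ 0) (x : ℤ) :
    eChar n ((d : ℤ) * x) = eChar (n / d) x := by
  have hd0 : d ≠ 0 := by rintro rfl; exact hn (zero_dvd_iff.mp hd)
  rw [eChar, eChar]
  congr 1
  have hcast : ((n / d : ℕ) : ℂ) = (n : ℂ) / (d : ℂ) := by
    rw [Nat.cast_div hd (Nat.cast_ne_zero.mpr hd0)]
  rw [hcast]
  have hn0 : (n : ℂ) ≠ 0 := Nat.cast_ne_zero.mpr hn
  have hd0' : (d : ℂ) ≠ 0 := Nat.cast_ne_zero.mpr hd0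
  field_simp
  push_cast
  ring

lemma ramanujan_step1 (a : ℤ) (ha : a.natAbs = 1) (n : ℕ) (hn : 0 < n) :
    ∑ d ∈ n.divisors,
        (∑ j ∈ (Finset.Icc 1 d).filter (fun j : ℕ => Nat.Coprime j d), eChar d (a * j))
      = if n = 1 then 1 else 0 := by
  have hn0 : n ≠ 0 := hn.ne'
  -- total sum over Icc 1 n
  have htot : ∑ j ∈ Finset.Icc 1 n, eChar n (a * j) = if n = 1 then 1 else 0 := by
    have h1 : Finset.Icc 1 n = insert n (Finset.Icc 1 (n - 1)) := by
      ext x; simp only [Finset.mem_Icc, Finset.mem_insert]; omega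
    have h2 : Finset.range n = insert 0 (Finset.Icc 1 (n - 1)) := by
      ext x; simp only [Finset.mem_range, Finset.mem_Icc, Finset.mem_insert]; omega
    have hmem1 : n ∉ Finset.Icc 1 (n - 1) := by simp only [Finset.mem_Icc]; omega
    have hmem2 : 0 ∉ Finset.Icc 1 (n - 1) := by simp only [Finset.mem_Icc]; omega
    have hval : eChar n (a * (n : ℤ)) = eChar n (a * (0 : ℤ)) := by
      apply eChar_congr hn0
      simp [Int.mul_emod_right]
    have heq : ∑ j ∈ Finset.Icc 1 n, eChar n (a * j)
        = ∑ j ∈ Finset.range n, eChar n (a * j) := by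
      rw [h1, h2, Finset.sum_insert hmem1, Finset.sum_insert hmem2, hval]
      push_cast
      ring
    rw [heq]
    have : ∀ j ∈ Finset.range n, eChar n (a * j) = eChar n ((j : ℤ) * a) := by
      intro j _; rw [mul_comm]
    rw [Finset.sum_congr rfl this, eChar_geom hn0 a]
    by_cases h1 : n = 1
    · subst h1
      simp
    · rw [if_neg h1, if_neg]
      intro hdvd
      have : n ∣ a.natAbs := by simpa using Int.natAbs_dvd_natAbs.mpr hdvd
      rw [ha] at this
      exact h1 (Nat.dvd_one.mp this)
  rw [← htot]
  -- group by gcd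
  have hgroup : ∑ j ∈ Finset.Icc 1 n, eChar n (a * j)
      = ∑ d ∈ n.divisors, ∑ j ∈ (Finset.Icc 1 n).filter (fun j => Nat.gcd j n = d),
          eChar n (a * j) :=
    (Finset.sum_fiberwise_of_maps_to
      (fun j _ => Nat.mem_divisors.mpr ⟨Nat.gcd_dvd_right j n, hn0⟩) _).symm
  rw [hgroup,
    ← Nat.sum_div_divisors n (fun d => ∑ j ∈ (Finset.Icc 1 d).filter
      (fun j : ℕ => Nat.Coprime j d), eChar d (a * j))]
  apply Finset.sum_congr rfl
  intro d hd
  obtain ⟨hdvd, -⟩ := Nat.mem_divisors.mp hd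
  have hd0 : d ≠ 0 := by rintro rfl; exact hn0 (zero_dvd_iff.mp hdvd)
  -- inner bijection j ↦ j / d
  apply Eq.symm
  apply Finset.sum_nbij' (i := fun j => j / d) (j := fun i => d * i)
  · intro j hj
    simp only [Finset.mem_filter, Finset.mem_Icc] at hj ⊢
    obtain ⟨⟨hj1, hj2⟩, hg⟩ := hj
    have hdj : d ∣ j := hg ▸ Nat.gcd_dvd_left j n
    refine ⟨⟨?_, Nat.div_le_div_right hj2⟩, ?_⟩
    · exact Nat.one_le_div_iff (by omega) |>.mpr (Nat.le_of_dvd (by omega) hdj)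
    · have := Nat.coprime_div_gcd_div_gcd (m := j) (n := n) (by omega : 0 < Nat.gcd j n)
      rwa [hg] at this
  · intro i hi
    simp only [Finset.mem_filter, Finset.mem_Icc] at hi ⊢
    obtain ⟨⟨hi1, hi2⟩, hc⟩ := hi
    refine ⟨⟨Nat.one_le_iff_ne_zero.mpr (Nat.mul_ne_zero hd0 (by omega)), ?_⟩, ?_⟩
    · calc d * i ≤ d * (n / d) := Nat.mul_le_mul_left d hi2
        _ = n := Nat.mul_div_cancel' hdvd
    · conv_lhs => rw [show n = d * (n / d) by rw [Nat.mul_div_cancel' hdvd]]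
      rw [Nat.gcd_mul_left, hc, mul_one]
  · intro j hj
    simp only [Finset.mem_filter, Finset.mem_Icc] at hj
    exact Nat.mul_div_cancel' (hj.2 ▸ Nat.gcd_dvd_left j n)
  · intro i _
    exact Nat.mul_div_cancel_left i (by omega)
  · intro j hj
    simp only [Finset.mem_filter, Finset.mem_Icc] at hj
    have hdj : d ∣ j := hj.2 ▸ Nat.gcd_dvd_left j n
    conv_lhs => rw [← Nat.mul_div_cancel' hdj]
    rw [show (a * ((d * (j / d) : ℕ) : ℤ)) = (d : ℤ) * (a * (j / d : ℕ)) by push_cast; ring]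
    exact eChar_div n d hdvd hn0 _

lemma ramanujan_pm (a : ℤ) (ha : a.natAbs = 1) (t : ℕ) (ht : t ≠ 0) :
    ∑ j ∈ (Finset.Icc 1 t).filter (fun j : ℕ => Nat.Coprime j t), eChar t (a * j)
      = ((ArithmeticFunction.moebius t : ℤ) : ℂ) := by
  have key := (ArithmeticFunction.sum_eq_iff_sum_smul_moebius_eq
    (f := fun d => ∑ j ∈ (Finset.Icc 1 d).filter (fun j : ℕ => Nat.Coprime j d), eChar d (a * j))
    (g := fun n => if n = 1 then (1 : ℂ) else 0)).mp
    (fun n hn => ramanujan_step1 a ha n hn) t (Nat.pos_of_ne_zero ht)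
  rw [← key]
  rw [Finset.sum_eq_single (t, 1)]
  · simp
  · rintro ⟨x, y⟩ hb hne
    rw [Nat.mem_divisorsAntidiagonal] at hb
    by_cases hy : y = 1
    · exfalso; apply hne; subst hy; simp at hb; simp [hb]
    · simp [hy]
  · intro habs
    exfalso
    exact habs (Nat.mem_divisorsAntidiagonal.mpr ⟨by simp, ht⟩)

lemma invModZ_natCast (j t : ℕ) : invModZ (j : ℤ) t = invMod j t := by
  simp [invModZ, invMod]

lemma invModZ_congr {t : ℕ} {x y : ℤ} (h : x % (t:ℤ) = y % (t:ℤ)) :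
    invModZ x t = invModZ y t := by
  unfold invModZ
  have hxy : ((x : ZMod t)) = (y : ZMod t) := by
    rw [ZMod.intCast_eq_intCast_iff]
    exact h
  rw [hxy]


theorem statement13 (t : ℕ) (ht : 1 ≤ t) (k : ℤ) (S : Finset ℤ) (F : ℤ → ℂ) :
    ∑ j ∈ (halfRes t).filter (fun j : ℤ => Int.gcd j (t : ℤ) = 1),
      (Real.cos (2 * Real.pi * (j : ℝ) / (t : ℝ)) : ℂ) *
        ∑ m ∈ S.filter (fun m : ℤ => m % (t : ℤ) = ((invModZ j t : ℤ) * k) % (t : ℤ)), F m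
    = ((ArithmeticFunction.moebius t : ℤ) : ℂ) / (t : ℂ) * ∑ m ∈ S, F m
      + (1 / (2 * (t : ℂ))) *
          ∑ s ∈ (halfRes t).filter (· ≠ 0),
            (kloosterman 1 (s * k) t + kloosterman (-1) (s * k) t) *
              ∑ m ∈ S, F m * eChar t (-(s * m)) := by
  have ht0 : t ≠ 0 := by omega
  have ht0C : (t : ℂ) ≠ 0 := Nat.cast_ne_zero.mpr ht0
  set hc := (halfRes t).filter (fun j : ℤ => Int.gcd j (t : ℤ) = 1) with hhc
  set M : ℤ → ℂ := fun s => ∑ m ∈ S, F m * eChar t (-(s * m)) with hM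
  -- Step 1: orthogonality / detector
  have key : ∀ Jv : ℤ, ∑ s ∈ halfRes t, eChar t (s * Jv) * M s
      = (t : ℂ) * ∑ m ∈ S.filter (fun m : ℤ => m % (t : ℤ) = Jv % (t : ℤ)), F m := by
    intro Jv
    have step1 : ∀ s : ℤ, eChar t (s * Jv) * M s
        = ∑ m ∈ S, F m * eChar t (s * (Jv - m)) := by
      intro s
      rw [hM, Finset.mul_sum]
      apply Finset.sum_congr rfl
      intro m _
      rw [show s * (Jv - m) = s * Jv + -(s * m) by ring, eChar_add]
      ring
    rw [Finset.sum_congr rfl (fun s _ => step1 s), Finset.sum_comm]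
    have inner : ∀ m : ℤ, ∑ s ∈ halfRes t, F m * eChar t (s * (Jv - m))
        = if m % (t:ℤ) = Jv % (t:ℤ) then (t : ℂ) * F m else 0 := by
      intro m
      rw [← Finset.mul_sum]
      have hper : ∀ x y : ℤ, x % (t:ℤ) = y % (t:ℤ) →
          eChar t (x * (Jv - m)) = eChar t (y * (Jv - m)) := by
        intro x y hxy
        exact eChar_congr ht0 (Int.ModEq.mul_right _ hxy)
      rw [sum_halfRes ht0 _ hper, eChar_geom ht0]
      by_cases hdvd : (t:ℤ) ∣ (Jv - m)
      · have h1 : (t:ℤ) ∣ m - Jv := by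
          rw [show m - Jv = -(Jv - m) by ring]
          exact dvd_neg.mpr hdvd
        rw [if_pos hdvd,
          if_pos (Int.emod_eq_emod_iff_emod_sub_eq_zero.mpr (Int.emod_eq_zero_of_dvd h1)),
          mul_comm]
      · rw [if_neg hdvd, if_neg, mul_zero]
        intro hmod
        apply hdvd
        have h2 : (t:ℤ) ∣ (m - Jv) :=
          Int.dvd_of_emod_eq_zero (Int.emod_eq_emod_iff_emod_sub_eq_zero.mp hmod)
        rw [show Jv - m = -(m - Jv) by ring]
        exact dvd_neg.mpr h2
    rw [Finset.sum_congr rfl (fun m _ => inner m), Finset.sum_ite, Finset.sum_const_zero,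
      add_zero, Finset.mul_sum]
  -- cos in terms of characters
  have hcos : ∀ j : ℤ, ((Real.cos (2 * Real.pi * (j : ℝ) / (t : ℝ)) : ℝ) : ℂ)
      = (eChar t (1 * j) + eChar t ((-1) * j)) / 2 := by
    intro j
    rw [Complex.ofReal_cos]
    unfold Complex.cos eChar
    congr 2
    · congr 1; push_cast; ring
    · congr 1; push_cast; ring
  -- the reduced-residue character sums
  have hK : ∀ s a : ℤ, ∑ j ∈ hc, eChar t (j * a + ((invModZ j t : ℕ) : ℤ) * (s * k))
      = kloosterman a (s * k) t := by
    intro s a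
    rw [hhc, kloosterman]
    rw [sum_halfRes_coprime ht0 (fun x => eChar t (x * a + ((invModZ x t : ℕ) : ℤ) * (s * k)))
      (by
        intro x y hxy
        show eChar t (x * a + ((invModZ x t : ℕ) : ℤ) * (s * k))
          = eChar t (y * a + ((invModZ y t : ℕ) : ℤ) * (s * k))
        rw [invModZ_congr (t := t) hxy]
        exact eChar_congr ht0 (Int.ModEq.add_right _ (Int.ModEq.mul_right _ hxy)))]
    apply Finset.sum_congr rfl
    intro j _
    rw [invModZ_natCast]
  -- the s-indexed weighted sums over reduced residues
  have hAsum : ∀ s : ℤ,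
      ∑ j ∈ hc, ((Real.cos (2 * Real.pi * (j : ℝ) / (t : ℝ)) : ℝ) : ℂ)
          * eChar t (s * (((invModZ j t : ℕ) : ℤ) * k))
        = (kloosterman 1 (s * k) t + kloosterman (-1) (s * k) t) / 2 := by
    intro s
    have hterm : ∀ j : ℤ,
        ((Real.cos (2 * Real.pi * (j : ℝ) / (t : ℝ)) : ℝ) : ℂ)
            * eChar t (s * (((invModZ j t : ℕ) : ℤ) * k))
          = (eChar t (j * 1 + ((invModZ j t : ℕ) : ℤ) * (s * k))
              + eChar t (j * (-1) + ((invModZ j t : ℕ) : ℤ) * (s * k))) / 2 := by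
      intro j
      rw [hcos j]
      have h1 : eChar t (1 * j) * eChar t (s * (((invModZ j t : ℕ) : ℤ) * k))
          = eChar t (j * 1 + ((invModZ j t : ℕ) : ℤ) * (s * k)) := by
        rw [← eChar_add]; congr 1; ring
      have h2 : eChar t ((-1) * j) * eChar t (s * (((invModZ j t : ℕ) : ℤ) * k))
          = eChar t (j * (-1) + ((invModZ j t : ℕ) : ℤ) * (s * k)) := by
        rw [← eChar_add]; congr 1; ring
      calc (eChar t (1 * j) + eChar t ((-1) * j)) / 2
            * eChar t (s * (((invModZ j t : ℕ) : ℤ) * k))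
          = (eChar t (1 * j) * eChar t (s * (((invModZ j t : ℕ) : ℤ) * k))
              + eChar t ((-1) * j) * eChar t (s * (((invModZ j t : ℕ) : ℤ) * k))) / 2 := by ring
        _ = _ := by rw [h1, h2]
    rw [Finset.sum_congr rfl (fun j _ => hterm j), ← Finset.sum_div,
      Finset.sum_add_distrib, hK s 1, hK s (-1)]
  -- Ramanujan: the cosine sum over reduced residues
  have cos_sum : ∑ j ∈ hc, ((Real.cos (2 * Real.pi * (j : ℝ) / (t : ℝ)) : ℝ) : ℂ)
      = ((ArithmeticFunction.moebius t : ℤ) : ℂ) := by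
    rw [Finset.sum_congr rfl (fun j _ => hcos j), ← Finset.sum_div, Finset.sum_add_distrib]
    have e1 : ∑ j ∈ hc, eChar t ((1:ℤ) * j)
        = ((ArithmeticFunction.moebius t : ℤ) : ℂ) := by
      rw [hhc, sum_halfRes_coprime ht0 (fun x => eChar t (1 * x))
        (fun x y hxy => eChar_congr ht0 (Int.ModEq.mul_left _ hxy))]
      exact ramanujan_pm 1 (by norm_num) t ht0
    have e2 : ∑ j ∈ hc, eChar t ((-1:ℤ) * j)
        = ((ArithmeticFunction.moebius t : ℤ) : ℂ) := by
      rw [hhc, sum_halfRes_coprime ht0 (fun x => eChar t ((-1) * x))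
        (fun x y hxy => eChar_congr ht0 (Int.ModEq.mul_left _ hxy))]
      exact ramanujan_pm (-1) (by norm_num) t ht0
    rw [e1, e2]
    ring
  -- assemble
  have h0mem : (0 : ℤ) ∈ halfRes t := by
    simp only [halfRes, Finset.mem_Icc]
    omega
  calc ∑ j ∈ hc, ((Real.cos (2 * Real.pi * (j : ℝ) / (t : ℝ)) : ℝ) : ℂ) *
        ∑ m ∈ S.filter (fun m : ℤ => m % (t : ℤ) = ((invModZ j t : ℤ) * k) % (t : ℤ)), F m
      = ∑ j ∈ hc, ((Real.cos (2 * Real.pi * (j : ℝ) / (t : ℝ)) : ℝ) : ℂ) *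
          ((1 / (t:ℂ)) * ∑ s ∈ halfRes t,
            eChar t (s * (((invModZ j t : ℕ) : ℤ) * k)) * M s) := by
        apply Finset.sum_congr rfl
        intro j _
        congr 1
        rw [key (((invModZ j t : ℕ) : ℤ) * k), one_div, inv_mul_cancel_left₀ ht0C]
    _ = (1 / (t:ℂ)) * ∑ s ∈ halfRes t,
          (∑ j ∈ hc, ((Real.cos (2 * Real.pi * (j : ℝ) / (t : ℝ)) : ℝ) : ℂ)
            * eChar t (s * (((invModZ j t : ℕ) : ℤ) * k))) * M s := by
        simp only [Finset.mul_sum, Finset.sum_mul]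
        rw [Finset.sum_comm]
        refine Finset.sum_congr rfl fun s _ => Finset.sum_congr rfl fun j _ => by ring
    _ = (1 / (t:ℂ)) *
          ((∑ j ∈ hc, ((Real.cos (2 * Real.pi * (j : ℝ) / (t : ℝ)) : ℝ) : ℂ)
              * eChar t ((0:ℤ) * (((invModZ j t : ℕ) : ℤ) * k))) * M 0
            + ∑ s ∈ (halfRes t).filter (· ≠ 0),
                (∑ j ∈ hc, ((Real.cos (2 * Real.pi * (j : ℝ) / (t : ℝ)) : ℝ) : ℂ)
                  * eChar t (s * (((invModZ j t : ℕ) : ℤ) * k))) * M s) := by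
        congr 1
        rw [← Finset.sum_filter_add_sum_filter_not (halfRes t) (· = 0)]
        congr 1
        rw [Finset.filter_eq', if_pos h0mem, Finset.sum_singleton]
    _ = ((ArithmeticFunction.moebius t : ℤ) : ℂ) / (t : ℂ) * ∑ m ∈ S, F m
        + (1 / (2 * (t : ℂ))) *
            ∑ s ∈ (halfRes t).filter (· ≠ 0),
              (kloosterman 1 (s * k) t + kloosterman (-1) (s * k) t) * M s := by
        have hz : ∀ j : ℤ, eChar t ((0:ℤ) * (((invModZ j t : ℕ) : ℤ) * k)) = 1 := by
          intro j; rw [zero_mul, eChar_zero]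
        have hM0 : M 0 = ∑ m ∈ S, F m := by
          rw [hM]
          apply Finset.sum_congr rfl
          intro m _
          rw [show -(0 * m) = (0:ℤ) by ring, eChar_zero, mul_one]
        have hzsum : (∑ j ∈ hc, ((Real.cos (2 * Real.pi * (j : ℝ) / (t : ℝ)) : ℝ) : ℂ)
              * eChar t ((0:ℤ) * (((invModZ j t : ℕ) : ℤ) * k)))
            = ∑ j ∈ hc, ((Real.cos (2 * Real.pi * (j : ℝ) / (t : ℝ)) : ℝ) : ℂ) := by
          apply Finset.sum_congr rfl
          intro j _
          rw [hz j, mul_one]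
        rw [hzsum, cos_sum, hM0]
        have hs : ∑ s ∈ (halfRes t).filter (· ≠ 0),
              (∑ j ∈ hc, ((Real.cos (2 * Real.pi * (j : ℝ) / (t : ℝ)) : ℝ) : ℂ)
                * eChar t (s * (((invModZ j t : ℕ) : ℤ) * k))) * M s
            = ∑ s ∈ (halfRes t).filter (· ≠ 0),
              ((kloosterman 1 (s * k) t + kloosterman (-1) (s * k) t) / 2) * M s := by
          apply Finset.sum_congr rfl
          intro s _
          rw [hAsum s]
        rw [hs, mul_add]
        congr 1
        · ring
        · rw [Finset.mul_sum, Finset.mul_sum]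
          apply Finset.sum_congr rfl
          intro s _
          ring
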